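/- The map h is continuous on N. -/

import Mathlib

open Filter Topology

private lemma zpow_mem_aux {M : Type*} [MetricSpace M] (g : M ≃ₜ M) {N : Set M}
    (hgN : g '' N = N) (n : ℤ) : ∀ x ∈ N, (g.toEquiv ^ n) x ∈ N := by
  have hfwd : ∀ x ∈ N, g x ∈ N := fun x hx => hgN ▸ Set.mem_image_of_mem g hx
  have hbwd : ∀ x ∈ N, g.symm x ∈ N := by
    intro x hx
    obtain ⟨w, hw, hwx⟩ : x ∈ g '' N := hgN.symm ▸ hx
    have : g.symm x = w := by rw [← hwx]; simp
    rw [this]; exact hw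
  induction n using Int.induction_on with
  | zero => intro x hx; simpa using hx
  | succ n ih =>
    intro x hx
    have : ((n : ℤ) + 1) = 1 + n := by ring
    rw [this, zpow_add, zpow_one, Equiv.Perm.mul_apply]
    exact hfwd _ (ih x hx)
  | pred n ih =>
    intro x hx
    have : (-(n : ℤ) - 1) = (-1) + (-n) := by ring
    rw [this, zpow_add, Equiv.Perm.mul_apply, zpow_neg_one]
    have : (g.toEquiv⁻¹ : Equiv.Perm M) = g.symm.toEquiv := rfl
    rw [this]
    exact hbwd _ (ih x hx)

private lemma zpow_cont_aux {M : Type*} [MetricSpace M] (g : M ≃ₜ M) (n : ℤ) :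
    Continuous fun x => (g.toEquiv ^ n) x := by
  induction n using Int.induction_on with
  | zero => simpa using continuous_id'
  | succ n ih =>
    have : ((n : ℤ) + 1) = 1 + n := by ring
    rw [this, zpow_add, zpow_one]
    simp only [Equiv.Perm.mul_apply]
    exact g.continuous.comp ih
  | pred n ih =>
    have : (-(n : ℤ) - 1) = (-1) + (-n) := by ring
    rw [this, zpow_add, zpow_neg_one]
    simp only [Equiv.Perm.mul_apply]
    have : (g.toEquiv⁻¹ : Equiv.Perm M) = g.symm.toEquiv := rfl
    rw [this]
    exact g.symm.continuous.comp ih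

private lemma conj_aux {M : Type*} [MetricSpace M] (f g : M ≃ₜ M) {N : Set M}
    (hgN : g '' N = N) (h : M → M) (hconj : ∀ x ∈ N, h (g x) = f (h x)) (n : ℤ) :
    ∀ x ∈ N, h ((g.toEquiv ^ n) x) = (f.toEquiv ^ n) (h x) := by
  have hbwdmem : ∀ x ∈ N, g.symm x ∈ N := by
    intro x hx
    obtain ⟨w, hw, hwx⟩ : x ∈ g '' N := hgN.symm ▸ hx
    have : g.symm x = w := by rw [← hwx]; simp
    rw [this]; exact hw
  have hbwd : ∀ x ∈ N, h (g.symm x) = f.symm (h x) := by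
    intro x hx
    have h1 := hconj (g.symm x) (hbwdmem x hx)
    rw [g.apply_symm_apply] at h1
    rw [h1]; simp
  induction n using Int.induction_on with
  | zero => intro x hx; simp
  | succ n ih =>
    intro x hx
    have e : ((n : ℤ) + 1) = 1 + n := by ring
    rw [e, zpow_add, zpow_one, zpow_add, zpow_one, Equiv.Perm.mul_apply,
      Equiv.Perm.mul_apply]
    have h2 := hconj ((g.toEquiv ^ (n : ℤ)) x) (zpow_mem_aux g hgN n x hx)
    rw [ih x hx] at h2
    exact h2
  | pred n ih =>
    intro x hx
    have e : (-(n : ℤ) - 1) = (-1) + (-n) := by ring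
    rw [e, zpow_add, zpow_add, zpow_neg_one, zpow_neg_one, Equiv.Perm.mul_apply,
      Equiv.Perm.mul_apply]
    have e1 : (g.toEquiv⁻¹ : Equiv.Perm M) = g.symm.toEquiv := rfl
    have e2 : (f.toEquiv⁻¹ : Equiv.Perm M) = f.symm.toEquiv := rfl
    rw [e1, e2]
    have h2 := hbwd ((g.toEquiv ^ (-n : ℤ)) x) (zpow_mem_aux g hgN (-n) x hx)
    rw [ih x hx] at h2
    exact h2

theorem stmt_7 {M : Type*} [MetricSpace M] [CompactSpace M]
    (f g : M ≃ₜ M) (N : Set M) (hfN : f '' N = N) (hgN : g '' N = N)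
    (Q : M → ℝ) (hQ : ∀ z ∈ N, 0 < Q z ∧ Q z < Metric.infDist z Nᶜ)
    (hQdouble : ∀ x ∈ N, ∀ y : M, dist x y ≤ Q x →
      (1 / 2) * Q x ≤ Q y ∧ Q y ≤ 2 * Q x)
    (hexp : ∀ x ∈ N, ∀ y ∈ N,
      (∀ n : ℤ, dist ((f.toEquiv ^ n) x) ((f.toEquiv ^ n) y) ≤ Q ((f.toEquiv ^ n) x)) →
      x = y)
    (h : M → M) (hhN : ∀ x ∈ N, h x ∈ N)
    (hconj : ∀ x ∈ N, h (g x) = f (h x))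
    (hclose : ∀ x ∈ N, dist (h x) x ≤ Q x / 50) :
    ContinuousOn h N := by
  -- key lemma: limits of images of sequences tending to x in N are h x
  have key : ∀ x ∈ N, ∀ (v : ℕ → M) (y : M), (∀ᶠ k in atTop, v k ∈ N) →
      Tendsto v atTop (𝓝 x) → Tendsto (fun k => h (v k)) atTop (𝓝 y) → y = h x := by
    intro x hx v y hvN hvx hvy
    -- general bound at level n
    have main : ∀ n : ℤ, dist ((f.toEquiv ^ n) (h x)) ((f.toEquiv ^ n) y) ≤
        Q ((f.toEquiv ^ n) (h x)) ∧
        dist ((f.toEquiv ^ n) y) ((g.toEquiv ^ n) x) ≤ Q ((g.toEquiv ^ n) x) / 25 := by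
      intro n
      set z := (g.toEquiv ^ n) x with hz_def
      have hzN : z ∈ N := zpow_mem_aux g hgN n x hx
      have hQz : 0 < Q z := (hQ z hzN).1
      -- sequence w k = g^n (v k) tends to z
      have hw : Tendsto (fun k => (g.toEquiv ^ n) (v k)) atTop (𝓝 z) :=
        ((zpow_cont_aux g n).tendsto x).comp hvx
      -- h (w k) tends to f^n y
      have hhw : Tendsto (fun k => h ((g.toEquiv ^ n) (v k))) atTop
          (𝓝 ((f.toEquiv ^ n) y)) := by
        have h1 : Tendsto (fun k => (f.toEquiv ^ n) (h (v k))) atTop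
            (𝓝 ((f.toEquiv ^ n) y)) := ((zpow_cont_aux f n).tendsto y).comp hvy
        refine h1.congr' ?_
        filter_upwards [hvN] with k hk
        exact (conj_aux f g hgN h hconj n (v k) hk).symm
      -- eventual distance bound
      have hdb : ∀ᶠ k in atTop, dist (h ((g.toEquiv ^ n) (v k))) z ≤
          Q z / 25 + dist ((g.toEquiv ^ n) (v k)) z := by
        have hsmall : ∀ᶠ k in atTop, dist ((g.toEquiv ^ n) (v k)) z ≤ Q z := by
          have := (hw.eventually (Metric.ball_mem_nhds z hQz))
          filter_upwards [this] with k hk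
          exact le_of_lt (by simpa [dist_comm] using hk)
        filter_upwards [hvN, hsmall] with k hk1 hk2
        set w := (g.toEquiv ^ n) (v k)
        have hwN : w ∈ N := zpow_mem_aux g hgN n (v k) hk1
        have hQw : Q w ≤ 2 * Q z :=
          (hQdouble z hzN w (by simpa [dist_comm] using hk2)).2
        calc dist (h w) z ≤ dist (h w) w + dist w z := dist_triangle _ _ _
          _ ≤ Q w / 50 + dist w z := by linarith [hclose w hwN]
          _ ≤ Q z / 25 + dist w z := by linarith
      -- pass to limit
      have hlim1 : Tendsto (fun k => dist (h ((g.toEquiv ^ n) (v k))) z) atTop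
          (𝓝 (dist ((f.toEquiv ^ n) y) z)) := hhw.dist tendsto_const_nhds
      have hd0 : Tendsto (fun k => dist ((g.toEquiv ^ n) (v k)) z) atTop (𝓝 0) :=
        tendsto_iff_dist_tendsto_zero.mp hw
      have hlim2 : Tendsto (fun k => Q z / 25 + dist ((g.toEquiv ^ n) (v k)) z) atTop
          (𝓝 (Q z / 25 + 0)) := tendsto_const_nhds.add hd0
      have hyz : dist ((f.toEquiv ^ n) y) z ≤ Q z / 25 := by
        have := le_of_tendsto_of_tendsto hlim1 hlim2 hdb
        linarith
      -- now the bound on dist (f^n (h x)) (f^n y)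
      have hconjx : (f.toEquiv ^ n) (h x) = h z := (conj_aux f g hgN h hconj n x hx).symm
      have hhz : dist (h z) z ≤ Q z / 50 := hclose z hzN
      have hQhz : (1 / 2) * Q z ≤ Q (h z) :=
        (hQdouble z hzN (h z) (by rw [dist_comm]; linarith)).1
      constructor
      · rw [hconjx]
        calc dist (h z) ((f.toEquiv ^ n) y) ≤ dist (h z) z + dist z ((f.toEquiv ^ n) y) :=
              dist_triangle _ _ _
          _ ≤ Q z / 50 + Q z / 25 := by rw [dist_comm z]; linarith
          _ ≤ Q (h z) := by linarith
      · exact hyz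
    -- y ∈ N
    have hyN : y ∈ N := by
      have h0 := (main 0).2
      simp only [zpow_zero, Equiv.Perm.coe_one, id_eq] at h0
      have hQx : 0 < Q x := (hQ x hx).1
      have : dist x y < Metric.infDist x Nᶜ := by
        rw [dist_comm]
        calc dist y x ≤ Q x / 25 := h0
          _ < Q x := by linarith
          _ < Metric.infDist x Nᶜ := (hQ x hx).2
      by_contra hyc
      exact absurd (Metric.infDist_le_dist_of_mem (by exact hyc : y ∈ Nᶜ)) (not_le.2 this)
    exact (hexp (h x) (hhN x hx) y hyN fun n => (main n).1).symm
  -- now the continuity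
  intro x hx
  rw [ContinuousWithinAt]
  apply tendsto_of_subseq_tendsto
  intro ns hns
  rw [tendsto_nhdsWithin_iff] at hns
  obtain ⟨hns1, hns2⟩ := hns
  obtain ⟨y, -, ms, hms, hty⟩ := IsCompact.tendsto_subseq (isCompact_univ)
    (fun k => Set.mem_univ (h (ns k)))
  have hyx : y = h x := by
    refine key x hx (fun k => ns (ms k)) y ?_ ?_ ?_
    · exact (hms.tendsto_atTop).eventually hns2
    · exact hns1.comp hms.tendsto_atTop
    · exact hty
  exact ⟨ms, hyx ▸ hty⟩
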